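/- arXiv:2203.13101 — 2 statements merged into one kernel-verified Lean document; each statement's English description precedes it below -/
import Mathlib

section
/- Let 0 < α < 1, T > 0 and let f : [0,T] → ℝ be continuously differentiable. Then for every t ∈ (0,T] one has the pointwise inequality f(t) · ᶜD^α_t f(t) ≥ (1/2) ᶜD^α_t (f²)(t); equivalently, since (f²)'(s) = 2 f(s) f'(s), f(t) · ∫₀^t f'(s)(t−s)^{−α} ds ≥ ∫₀^t f(s) f'(s)(t−s)^{−α} ds. -/
open intervalIntegral

/-- **Alikhanov's inequality** (equivalent form, without the common factor
`1/Γ(1−α)`): for `0 < α < 1` and `f` continuously differentiable on `[0,T]`,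
for every `t ∈ (0,T]` one has
`∫₀^t f(s) f'(s) (t−s)^{−α} ds ≤ f(t) ∫₀^t f'(s) (t−s)^{−α} ds`,
i.e. `f(t) · ᶜD^α_t f(t) ≥ (1/2) ᶜD^α_t (f²)(t)`. -/
theorem caputo_product_inequality
    (α T : ℝ) (hα0 : 0 < α) (hα1 : α < 1) (hT : 0 < T)
    (f f' : ℝ → ℝ)
    (hf : ∀ s ∈ Set.Icc (0:ℝ) T, HasDerivWithinAt f (f' s) (Set.Icc (0:ℝ) T) s)
    (hf' : ContinuousOn f' (Set.Icc (0:ℝ) T)) :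
    ∀ t ∈ Set.Ioc (0:ℝ) T,
      (∫ s in (0:ℝ)..t, f s * f' s * (t - s) ^ (-α)) ≤
        f t * ∫ s in (0:ℝ)..t, f' s * (t - s) ^ (-α) := by
  intro t ht
  obtain ⟨ht0, htT⟩ := ht
  have htT' : Set.Icc (0:ℝ) t ⊆ Set.Icc 0 T := Set.Icc_subset_Icc le_rfl htT
  have hcf : ContinuousOn f (Set.Icc 0 T) := fun x hx => (hf x hx).continuousWithinAt
  -- integrability of the weight
  have hw : IntervalIntegrable (fun s => (t - s) ^ (-α)) MeasureTheory.volume 0 t := by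
    have h1 : IntervalIntegrable (fun x : ℝ => x ^ (-α)) MeasureTheory.volume t 0 :=
      intervalIntegrable_rpow' (by linarith)
    simpa using h1.comp_sub_left t
  have huIcc : Set.uIcc (0:ℝ) t = Set.Icc 0 t := Set.uIcc_of_le ht0.le
  have hcf' : ContinuousOn f' (Set.uIcc (0:ℝ) t) := by
    rw [huIcc]; exact hf'.mono htT'
  have hcfm : ContinuousOn f (Set.uIcc (0:ℝ) t) := by
    rw [huIcc]; exact hcf.mono htT'
  have h1 : IntervalIntegrable (fun s => f' s * (t - s) ^ (-α)) MeasureTheory.volume 0 t :=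
    hw.continuousOn_mul hcf'
  have h2 : IntervalIntegrable (fun s => f s * f' s * (t - s) ^ (-α)) MeasureTheory.volume 0 t :=
    hw.continuousOn_mul (hcfm.mul hcf')
  set g : ℝ → ℝ := fun s => (f t - f s) * f' s * (t - s) ^ (-α) with hg_def
  have hg : IntervalIntegrable g MeasureTheory.volume 0 t :=
    hw.continuousOn_mul ((continuousOn_const.sub hcfm).mul hcf')
  -- bound on f'
  obtain ⟨M, hM⟩ := (isCompact_Icc (a := (0:ℝ)) (b := T)).exists_bound_of_continuousOn hf'
  have hM0 : 0 ≤ M := le_trans (norm_nonneg _) (hM 0 ⟨le_rfl, hT.le⟩)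
  have hLip : ∀ x ∈ Set.Icc (0:ℝ) t, |f t - f x| ≤ M * (t - x) := by
    intro x hx
    have := (convex_Icc (0:ℝ) T).norm_image_sub_le_of_norm_hasDerivWithin_le hf hM
      (htT' hx) ⟨ht0.le, htT⟩
    rwa [Real.norm_eq_abs, Real.norm_eq_abs, abs_of_nonneg (by linarith [hx.2] : (0:ℝ) ≤ t - x)]
      at this
  -- primitive
  set G : ℝ → ℝ := fun x => ∫ s in (0:ℝ)..x, g s with hG_def
  have hGcont : ContinuousOn G (Set.Icc 0 t) := by
    have : MeasureTheory.IntegrableOn g (Set.Icc 0 t) MeasureTheory.volume :=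
      (intervalIntegrable_iff_integrableOn_Icc_of_le ht0.le).mp hg
    rw [hG_def, ← huIcc]
    exact intervalIntegral.continuousOn_primitive_interval (μ := MeasureTheory.volume) (by rwa [huIcc])
  -- key lower bound for x < t
  have key : ∀ x ∈ Set.Ico (0:ℝ) t, -(M^2 * (t - x) ^ (2 - α) / 2) ≤ G x := by
    intro x hx
    obtain ⟨hx0, hxt⟩ := hx
    set H : ℝ → ℝ := fun s => (f t - f s)^2 * (t - s) ^ (-α) / 2 with hH_def
    set φ : ℝ → ℝ := fun s => -g s + α / 2 * (f t - f s)^2 * (t - s) ^ (-α - 1) with hφ_def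
    have hHd : ∀ s ∈ Set.Ioo (0:ℝ) x, HasDerivAt H (φ s) s := by
      intro s hs
      have hst : s < t := hs.2.trans hxt
      have hts : (0:ℝ) < t - s := by linarith
      have hfs : HasDerivAt f (f' s) s := by
        have hmem : Set.Icc (0:ℝ) T ∈ nhds s :=
          Icc_mem_nhds hs.1 (lt_of_lt_of_le hst htT)
        exact ((hf s ⟨hs.1.le, (hst.trans_le htT).le⟩).hasDerivAt hmem)
      have hd1 : HasDerivAt (fun u => f t - f u) (-f' s) s := hfs.const_sub (f t)
      have hd2 : HasDerivAt (fun u => (f t - f u)^2) (2 * (f t - f s) * (-f' s)) s := by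
        simpa [mul_comm, mul_assoc] using hd1.fun_pow 2
      have hd3 : HasDerivAt (fun u => (t - u) ^ (-α)) (α * (t - s) ^ (-α - 1)) s := by
        have hr : HasDerivAt (fun y : ℝ => y ^ (-α)) (-α * (t - s) ^ (-α - 1)) (t - s) :=
          Real.hasDerivAt_rpow_const (Or.inl hts.ne')
        have hc : HasDerivAt (fun u : ℝ => t - u) (-1) s := (hasDerivAt_id s).const_sub t
        have := hr.comp s hc
        simpa [Function.comp_def] using this.congr_deriv (by ring)
      have := ((hd2.fun_mul hd3).div_const 2)
      refine this.congr_deriv ?_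
      simp only [hφ_def, hg_def]
      ring
    have hHcont : ContinuousOn H (Set.Icc 0 x) := by
      apply ContinuousOn.div_const
      apply ContinuousOn.mul
      · exact ((continuousOn_const.sub (hcf.mono (fun y hy => htT' ⟨hy.1, hy.2.trans hxt.le⟩))).pow 2)
      · intro y hy
        apply (Real.continuousAt_rpow_const _ _ (Or.inl _)).continuousWithinAt.comp
          (continuousWithinAt_const.sub continuousWithinAt_id) (Set.mapsTo_univ _ _)
        have : y < t := lt_of_le_of_lt hy.2 hxt
        simp; linarith
    have hφcont : ContinuousOn φ (Set.Icc 0 x) := by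
      have hwc : ∀ (p : ℝ), ContinuousOn (fun s : ℝ => (t - s) ^ (p:ℝ)) (Set.Icc 0 x) := by
        intro p y hy
        apply (Real.continuousAt_rpow_const _ _ (Or.inl _)).continuousWithinAt.comp
          (continuousWithinAt_const.sub continuousWithinAt_id) (Set.mapsTo_univ _ _)
        have : y < t := lt_of_le_of_lt hy.2 hxt
        simp; linarith
      have hsub : Set.Icc (0:ℝ) x ⊆ Set.Icc 0 t := Set.Icc_subset_Icc le_rfl hxt.le
      have hcfx : ContinuousOn f (Set.Icc 0 x) := hcf.mono (hsub.trans htT')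
      have hcf'x : ContinuousOn f' (Set.Icc 0 x) := hf'.mono (hsub.trans htT')
      exact (((continuousOn_const.sub hcfx).mul hcf'x).mul (hwc (-α))).neg.add
        ((continuousOn_const.mul ((continuousOn_const.sub hcfx).pow 2)).mul (hwc (-α-1)))
    have hφint : IntervalIntegrable φ MeasureTheory.volume 0 x :=
      hφcont.intervalIntegrable_of_Icc hx0
    have hftc : ∫ s in (0:ℝ)..x, φ s = H x - H 0 :=
      integral_eq_sub_of_hasDeriv_right_of_le hx0 hHcont
        (fun s hs => (hHd s hs).hasDerivWithinAt) hφint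
    have hgx : IntervalIntegrable g MeasureTheory.volume 0 x :=
      hg.mono_set (by rw [huIcc, Set.uIcc_of_le hx0]; exact Set.Icc_subset_Icc le_rfl hxt.le)
    have hψ : (0:ℝ) ≤ ∫ s in (0:ℝ)..x, (g s + φ s) := by
      apply intervalIntegral.integral_nonneg hx0
      intro s hs
      have hst : s ≤ x := hs.2
      have hts : (0:ℝ) < t - s := by linarith [hxt]
      have : g s + φ s = α / 2 * (f t - f s)^2 * (t - s) ^ (-α - 1) := by
        simp only [hφ_def]; ring
      rw [this]
      positivity
    rw [intervalIntegral.integral_add hgx hφint, hftc] at hψ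
    have hH0 : 0 ≤ H 0 := by
      simp only [hH_def]
      apply div_nonneg _ (by norm_num)
      exact mul_nonneg (sq_nonneg _) (Real.rpow_nonneg (by linarith) _)
    have hHx : H x ≤ M^2 * (t - x) ^ (2 - α) / 2 := by
      have hb := hLip x ⟨hx0, hxt.le⟩
      have htx : (0:ℝ) < t - x := by linarith
      have hab := abs_le.mp hb
      have hsq : (f t - f x)^2 ≤ (M * (t - x))^2 := sq_le_sq' hab.1 hab.2
      have hrw : (M * (t - x))^2 * (t - x) ^ (-α) = M^2 * (t - x) ^ (2 - α) := by
        have h2 : (t - x) ^ ((2:ℝ) - α) = (t - x) ^ ((2:ℝ)) * (t - x) ^ (-α) := by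
          rw [← Real.rpow_add htx]; ring_nf
        have h3 : (t - x) ^ ((2:ℝ)) = (t - x) ^ (2:ℕ) := by
          rw [← Real.rpow_natCast]; norm_num
        rw [h2, h3]; ring
      have hwpos : (0:ℝ) ≤ (t - x) ^ (-α) := Real.rpow_nonneg htx.le _
      calc H x = (f t - f x)^2 * (t - x) ^ (-α) / 2 := rfl
        _ ≤ (M * (t - x))^2 * (t - x) ^ (-α) / 2 := by
            have := mul_le_mul_of_nonneg_right hsq hwpos
            linarith
        _ = M^2 * (t - x) ^ (2 - α) / 2 := by rw [hrw]
    simp only [hG_def]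
    linarith
  -- pass to the limit x → t⁻
  have hne : (nhdsWithin t (Set.Ico 0 t)).NeBot := by
    rw [nhdsWithin_Ico_eq_nhdsLT ht0]
    exact nhdsLT_neBot t
  have hGt : Filter.Tendsto G (nhdsWithin t (Set.Ico 0 t)) (nhds (G t)) := by
    have := (hGcont t ⟨ht0.le, le_rfl⟩).tendsto
    exact this.mono_left (nhdsWithin_mono t (fun y hy => ⟨hy.1, hy.2.le⟩))
  have hBt : Filter.Tendsto (fun x => -(M^2 * (t - x) ^ (2 - α) / 2))
      (nhdsWithin t (Set.Ico 0 t)) (nhds 0) := by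
    have h2α : (0:ℝ) < 2 - α := by linarith
    have : Filter.Tendsto (fun x : ℝ => (t - x) ^ (2 - α)) (nhds t) (nhds 0) := by
      have hc : ContinuousAt (fun x : ℝ => (t - x) ^ (2 - α)) t := by
        apply (Real.continuousAt_rpow_const _ _ (Or.inr h2α.le)).comp
        exact (continuous_const.sub continuous_id).continuousAt
      have : (fun x : ℝ => (t - x) ^ (2 - α)) t = 0 := by
        simp [Real.zero_rpow h2α.ne']
      rw [← this]; exact hc
    have := ((this.const_mul (M^2)).div_const 2).neg
    simpa using this.mono_left nhdsWithin_le_nhds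
  have h0le : (0:ℝ) ≤ G t := by
    refine le_of_tendsto_of_tendsto hBt hGt ?_
    filter_upwards [self_mem_nhdsWithin] with x hx using key x hx
  -- conclude
  have heq : G t = f t * (∫ s in (0:ℝ)..t, f' s * (t - s) ^ (-α)) -
      ∫ s in (0:ℝ)..t, f s * f' s * (t - s) ^ (-α) := by
    rw [← intervalIntegral.integral_const_mul, ← intervalIntegral.integral_sub
      (h1.const_mul (f t)) h2]
    apply intervalIntegral.integral_congr
    intro s _
    simp only [hg_def]; ring
  linarith [heq ▸ h0le]
end

section
/- Let n ≥ 5, 0 < α < 1, 1 ≤ p < n/(n−2), C₀ > 0 and c > 0. There exists a constant C > 0, depending only on n, α, p, C₀, c, such that for every τ > 0 and every measurable function g : ℝⁿ → ℝ satisfying |g(x)| ≤ C₀ τ^{−α−1} |x|^{−(n−2)} whenever 0 < |x| ≤ τ^{α/2}, and |g(x)| ≤ C₀ τ^{−α(n+2)/2−1+α} exp(−c (|x| τ^{−α/2})^{2/(2−α)}) whenever |x| > τ^{α/2}, one has ‖g‖_{L^p(ℝⁿ)} ≤ C τ^{−1 − (αn/2)(1−1/p)}. -/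
open MeasureTheory Measure Metric Set Real
open scoped ENNReal

theorem lintegral_fun_norm_aux {E : Type*} [NormedAddCommGroup E] [NormedSpace ℝ E]
    [MeasurableSpace E] [BorelSpace E] [FiniteDimensional ℝ E] [Nontrivial E]
    (μ : Measure E) [μ.IsAddHaarMeasure] (f : ℝ → ℝ≥0∞) (hf : Measurable f) :
    ∫⁻ x, f ‖x‖ ∂μ = (Module.finrank ℝ E) * μ (ball 0 1) *
      ∫⁻ y in Ioi (0:ℝ), ENNReal.ofReal (y ^ (Module.finrank ℝ E - 1)) * f y := by
  have h0 := lintegral_subtype_comap (μ := μ) (measurableSet_singleton (0:E)).compl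
    (fun x => f ‖x‖)
  rw [MeasureTheory.restrict_compl_singleton] at h0
  have h1 : ∫⁻ x : ({(0:E)}ᶜ : Set E), f ‖(x:E)‖ ∂(μ.comap (↑)) =
      ∫⁻ q : sphere (0:E) 1 × Ioi (0:ℝ), f q.2
        ∂(μ.toSphere.prod (Measure.volumeIoiPow (Module.finrank ℝ E - 1))) :=
    by
      have := μ.measurePreserving_homeomorphUnitSphereProd.lintegral_comp_emb
        (Homeomorph.measurableEmbedding _) (fun q => f q.2)
      simpa only [homeomorphUnitSphereProd_apply_snd_coe] using this
  have h2 := lintegral_prod (μ := μ.toSphere)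
    (ν := Measure.volumeIoiPow (Module.finrank ℝ E - 1))
    (fun q : sphere (0:E) 1 × Ioi (0:ℝ) => f q.2)
    ((hf.comp (measurable_subtype_coe.comp measurable_snd)).aemeasurable)
  have h3 : ∫⁻ r : Ioi (0:ℝ), f r ∂(Measure.volumeIoiPow (Module.finrank ℝ E - 1)) =
      ∫⁻ y in Ioi (0:ℝ), ENNReal.ofReal (y ^ (Module.finrank ℝ E - 1)) * f y := by
    have h4 := lintegral_withDensity_eq_lintegral_mul
      (Measure.comap (Subtype.val : Ioi (0:ℝ) → ℝ) volume)
      (f := fun r : Ioi (0:ℝ) => ENNReal.ofReal (r.1 ^ (Module.finrank ℝ E - 1)))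
      ((measurable_subtype_coe.pow_const _).ennreal_ofReal)
      (g := fun r : Ioi (0:ℝ) => f r.1) (hf.comp measurable_subtype_coe)
    rw [Measure.volumeIoiPow, h4]
    have h5 := lintegral_subtype_comap (μ := (volume : Measure ℝ))
      (measurableSet_Ioi (a := (0:ℝ)))
      (fun y => ENNReal.ofReal (y ^ (Module.finrank ℝ E - 1)) * f y)
    simp only [Pi.mul_apply]
    exact h5
  rw [← h0, h1, h2]
  simp only [lintegral_const, h3]
  rw [Measure.toSphere_apply_univ]
  ring

theorem inner_1d (n : ℕ) (hn : 0 < n) (R t : ℝ) (hR : 0 < R)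
    (htn : t < (n : ℝ)) :
    ∫⁻ y in Ioi (0:ℝ), ENNReal.ofReal (y ^ (n - 1)) *
      ENNReal.ofReal (if y ≤ R then y ^ (-t) else 0)
      = ENNReal.ofReal (R ^ ((n:ℝ) - t) / ((n:ℝ) - t)) := by
  have hnt : (0:ℝ) < (n:ℝ) - t := by linarith
  set ρ : ℝ := (n:ℝ) - 1 - t with hρ
  have hρ1 : (-1:ℝ) < ρ := by rw [hρ]; linarith
  have hcongr : ∀ y ∈ Ioi (0:ℝ),
      ENNReal.ofReal (y ^ (n - 1)) * ENNReal.ofReal (if y ≤ R then y ^ (-t) else 0)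
      = ENNReal.ofReal ((Ioc (0:ℝ) R).indicator (fun z => z ^ ρ) y) := by
    intro y hy
    have hy0 : (0:ℝ) < y := hy
    rw [← ENNReal.ofReal_mul (by positivity)]
    congr 1
    by_cases h : y ≤ R
    · rw [if_pos h, Set.indicator_of_mem (Set.mem_Ioc.mpr ⟨hy0, h⟩),
        ← Real.rpow_natCast y (n-1), ← Real.rpow_add hy0]
      congr 1
      rw [Nat.cast_sub hn, Nat.cast_one, hρ]
      ring
    · rw [if_neg h, Set.indicator_of_notMem (fun hmem => h hmem.2), mul_zero]
  rw [setLIntegral_congr_fun measurableSet_Ioi hcongr]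
  have hind : (fun y : ℝ => ENNReal.ofReal ((Ioc (0:ℝ) R).indicator (fun z => z ^ ρ) y))
      = (Ioc (0:ℝ) R).indicator (fun z => ENNReal.ofReal (z ^ ρ)) := by
    funext y
    by_cases h : y ∈ Ioc (0:ℝ) R
    · rw [Set.indicator_of_mem h, Set.indicator_of_mem h]
    · rw [Set.indicator_of_notMem h, Set.indicator_of_notMem h, ENNReal.ofReal_zero]
  rw [hind, lintegral_indicator measurableSet_Ioc,
    Measure.restrict_restrict measurableSet_Ioc,
    Set.inter_eq_left.mpr Ioc_subset_Ioi_self]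
  have hInt : IntegrableOn (fun z : ℝ => z ^ ρ) (Ioc (0:ℝ) R) :=
    (intervalIntegral.intervalIntegrable_rpow' hρ1 (a := 0) (b := R)).1
  have hnn : 0 ≤ᵐ[volume.restrict (Ioc (0:ℝ) R)] fun z : ℝ => z ^ ρ := by
    filter_upwards [ae_restrict_mem measurableSet_Ioc] with y hy
    exact Real.rpow_nonneg hy.1.le ρ
  rw [← ofReal_integral_eq_lintegral_ofReal hInt hnn]
  congr 1
  rw [← intervalIntegral.integral_of_le hR.le, integral_rpow (Or.inl hρ1)]
  have hρ2 : ρ + 1 = (n:ℝ) - t := by rw [hρ]; ring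
  rw [Real.zero_rpow (by rw [hρ2]; exact hnt.ne'), hρ2, sub_zero]

theorem outer_1d (n : ℕ) (hn : 0 < n) (R b s : ℝ) (hR : 0 < R) (hb : 0 < b) (hs : 1 ≤ s) :
    ∫⁻ y in Ioi (0:ℝ), ENNReal.ofReal (y ^ (n - 1)) *
      ENNReal.ofReal (Real.exp (-b * (y * R⁻¹) ^ s))
      = ENNReal.ofReal (R ^ (n:ℝ) *
          (b ^ (-(n:ℝ)/s) * (1/s) * Real.Gamma ((n:ℝ)/s))) := by
  have hs0 : (0:ℝ) < s := lt_of_lt_of_le one_pos hs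
  have hn1 : (-1:ℝ) < (n:ℝ) - 1 := by
    have : (1:ℝ) ≤ (n:ℝ) := by exact_mod_cast hn
    linarith
  set b' : ℝ := b * R ^ (-s) with hb'
  have hb'0 : 0 < b' := mul_pos hb (Real.rpow_pos_of_pos hR _)
  have hcongr : ∀ y ∈ Ioi (0:ℝ),
      ENNReal.ofReal (y ^ (n - 1)) * ENNReal.ofReal (Real.exp (-b * (y * R⁻¹) ^ s))
      = ENNReal.ofReal (y ^ ((n:ℝ) - 1) * Real.exp (-b' * y ^ s)) := by
    intro y hy
    have hy0 : (0:ℝ) < y := hy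
    rw [← ENNReal.ofReal_mul (by positivity)]
    congr 1
    rw [← Real.rpow_natCast y (n-1), Nat.cast_sub hn, Nat.cast_one]
    congr 2
    rw [Real.mul_rpow hy0.le (inv_nonneg.mpr hR.le), Real.inv_rpow hR.le,
      ← Real.rpow_neg hR.le, hb']
    ring
  rw [setLIntegral_congr_fun measurableSet_Ioi hcongr]
  have hInt : IntegrableOn (fun y : ℝ => y ^ ((n:ℝ) - 1) * Real.exp (-b' * y ^ s)) (Ioi 0) :=
    integrableOn_rpow_mul_exp_neg_mul_rpow hn1 hs0 hb'0
  have hnn : 0 ≤ᵐ[volume.restrict (Ioi (0:ℝ))]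
      fun y : ℝ => y ^ ((n:ℝ) - 1) * Real.exp (-b' * y ^ s) := by
    filter_upwards [ae_restrict_mem measurableSet_Ioi] with y hy
    exact mul_nonneg (Real.rpow_nonneg (le_of_lt hy) _) (Real.exp_pos _).le
  rw [← ofReal_integral_eq_lintegral_ofReal hInt hnn]
  congr 1
  rw [integral_rpow_mul_exp_neg_mul_rpow hs0 hn1 hb'0]
  have h1 : (n:ℝ) - 1 + 1 = (n:ℝ) := by ring
  rw [h1]
  have h2 : b' ^ (-(n:ℝ)/s) = b ^ (-(n:ℝ)/s) * R ^ (n:ℝ) := by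
    rw [hb', Real.mul_rpow hb.le (Real.rpow_pos_of_pos hR _).le]
    congr 1
    rw [← Real.rpow_mul hR.le]
    congr 1
    field_simp
  rw [h2]
  ring

/-- **`L^p` estimate for the second derivatives of the Duhamel kernel `Y_τ`.**
For `n ≥ 5`, `0 < α < 1`, `1 ≤ p < n/(n−2)`, there is `C > 0` depending only
on `n, α, p, C₀, c` such that any measurable `g` with
`|g(x)| ≤ C₀ τ^{−α−1}|x|^{−(n−2)}` for `0 < |x| ≤ τ^{α/2}` and
`|g(x)| ≤ C₀ τ^{−α(n+2)/2−1+α} exp(−c(|x|τ^{−α/2})^{2/(2−α)})` for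
`|x| > τ^{α/2}` satisfies `‖g‖_{L^p} ≤ C τ^{−1−(αn/2)(1−1/p)}`. -/
theorem lp_estimate_laplacian_kernel_Y
    (n : ℕ) (hn : 5 ≤ n) (α p C₀ c : ℝ)
    (hα0 : 0 < α) (hα1 : α < 1)
    (hp1 : 1 ≤ p) (hp2 : p < (n : ℝ) / ((n : ℝ) - 2)) (hC₀ : 0 < C₀) (hc : 0 < c) :
    ∃ C > 0, ∀ τ : ℝ, 0 < τ →
      ∀ g : EuclideanSpace ℝ (Fin n) → ℝ, Measurable g →
      (∀ x : EuclideanSpace ℝ (Fin n), 0 < ‖x‖ → ‖x‖ ≤ τ ^ (α / 2) →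
        |g x| ≤ C₀ * τ ^ (-α - 1) * ‖x‖ ^ (-((n : ℝ) - 2))) →
      (∀ x : EuclideanSpace ℝ (Fin n), τ ^ (α / 2) < ‖x‖ →
        |g x| ≤ C₀ * τ ^ (-(α * ((n : ℝ) + 2) / 2) - 1 + α) *
          Real.exp (-c * (‖x‖ * τ ^ (-(α / 2))) ^ (2 / (2 - α)))) →
      eLpNorm g (ENNReal.ofReal p) volume ≤
        ENNReal.ofReal (C * τ ^ (-1 - (α * (n : ℝ) / 2) * (1 - 1 / p))) := by
  haveI : Nonempty (Fin n) := ⟨⟨0, by omega⟩⟩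
  have hp0 : 0 < p := lt_of_lt_of_le one_pos hp1
  have hn5 : (5:ℝ) ≤ (n:ℝ) := by exact_mod_cast hn
  have hn2 : (0:ℝ) < (n:ℝ) - 2 := by linarith
  set t : ℝ := ((n:ℝ) - 2) * p with ht_def
  have htn : t < (n:ℝ) := by
    have h := (lt_div_iff₀ hn2).mp hp2
    rw [ht_def]; nlinarith
  have ht0 : 0 ≤ t := mul_nonneg hn2.le hp0.le
  have h2α : (0:ℝ) < 2 - α := by linarith
  set s : ℝ := 2 / (2 - α) with hs_def
  have hs1 : 1 ≤ s := by rw [hs_def, le_div_iff₀ h2α]; linarith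
  have hs0 : 0 < s := lt_of_lt_of_le one_pos hs1
  set v : ℝ := (volume (ball (0 : EuclideanSpace ℝ (Fin n)) 1)).toReal with hv_def
  have hvol : volume (ball (0 : EuclideanSpace ℝ (Fin n)) 1) = ENNReal.ofReal v :=
    (ENNReal.ofReal_toReal measure_ball_lt_top.ne).symm
  have hv : 0 < v :=
    ENNReal.toReal_pos (measure_ball_pos volume 0 one_pos).ne' measure_ball_lt_top.ne
  set K2 : ℝ := (p * c) ^ (-(n:ℝ)/s) * (1/s) * Real.Gamma ((n:ℝ)/s) with hK2_def
  have hK2 : 0 < K2 := by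
    refine mul_pos (mul_pos (Real.rpow_pos_of_pos (mul_pos hp0 hc) _) (by positivity)) ?_
    exact Real.Gamma_pos_of_pos (by positivity)
  set A1 : ℝ := C₀ * ((n:ℝ) * v / ((n:ℝ) - t)) ^ (1/p) with hA1_def
  set A2 : ℝ := C₀ * ((n:ℝ) * v * K2) ^ (1/p) with hA2_def
  have hnv : (0:ℝ) < (n:ℝ) * v := by positivity
  have hA1 : 0 < A1 := mul_pos hC₀ (Real.rpow_pos_of_pos (by
    exact div_pos hnv (by linarith)) _)
  have hA2 : 0 < A2 := mul_pos hC₀ (Real.rpow_pos_of_pos (by positivity) _)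
  refine ⟨A1 + A2, by positivity, ?_⟩
  intro τ hτ g hgm hin hout
  set e : ℝ := -1 - α * (n:ℝ) / 2 * (1 - 1/p) with he_def
  set R : ℝ := τ ^ (α/2) with hR_def
  have hR : 0 < R := Real.rpow_pos_of_pos hτ _
  have hτR : τ ^ (-(α/2)) = R⁻¹ := by rw [Real.rpow_neg hτ.le]
  set C₁ : ℝ := C₀ * τ ^ (-α - 1) with hC₁_def
  set C₂ : ℝ := C₀ * τ ^ (-(α * ((n:ℝ) + 2) / 2) - 1 + α) with hC₂_def
  have hC₁ : 0 < C₁ := mul_pos hC₀ (Real.rpow_pos_of_pos hτ _)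
  have hC₂ : 0 < C₂ := mul_pos hC₀ (Real.rpow_pos_of_pos hτ _)
  set ψ : EuclideanSpace ℝ (Fin n) → ℝ :=
    fun x => if ‖x‖ ≤ R then ‖x‖ ^ (-((n:ℝ) - 2)) else 0 with hψ_def
  set φ : EuclideanSpace ℝ (Fin n) → ℝ :=
    fun x => Real.exp (-c * (‖x‖ * τ ^ (-(α/2))) ^ s) with hφ_def
  have hψm : Measurable ψ :=
    Measurable.ite (measurableSet_le measurable_norm measurable_const)
      (measurable_norm.pow_const _) measurable_const
  have hφm : Measurable φ :=
    Real.measurable_exp.comp (((measurable_norm.mul_const _).pow_const s).const_mul (-c))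
  have hψ0 : ∀ x, 0 ≤ ψ x := by
    intro x
    rw [hψ_def]
    dsimp only
    split
    · exact Real.rpow_nonneg (norm_nonneg x) _
    · exact le_refl 0
  set f₁ : EuclideanSpace ℝ (Fin n) → ℝ := fun x => C₁ * ψ x with hf₁_def
  set f₂ : EuclideanSpace ℝ (Fin n) → ℝ := fun x => C₂ * φ x with hf₂_def
  have hpne : p ≠ 0 := hp0.ne'
  have hq0 : (ENNReal.ofReal p) ≠ 0 := (ENNReal.ofReal_pos.mpr hp0).ne'
  have hqt : (ENNReal.ofReal p) ≠ ∞ := ENNReal.ofReal_ne_top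
  have hqr : (ENNReal.ofReal p).toReal = p := ENNReal.toReal_ofReal hp0.le
  have hq1 : 1 ≤ ENNReal.ofReal p := ENNReal.one_le_ofReal.mpr hp1
  have hnt' : (0:ℝ) < (n:ℝ) - t := by linarith
  -- a.e. pointwise bound
  have hae : ∀ᵐ x ∂(volume : Measure (EuclideanSpace ℝ (Fin n))), ‖g x‖ ≤ (f₁ + f₂) x := by
    have h0 : ∀ᵐ x ∂(volume : Measure (EuclideanSpace ℝ (Fin n))), x ≠ 0 := by
      rw [ae_iff]
      have hset : {x : EuclideanSpace ℝ (Fin n) | ¬ x ≠ 0} = {0} := by ext x; simp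
      rw [hset]
      exact measure_singleton 0
    filter_upwards [h0] with x hx
    have hx0 : 0 < ‖x‖ := norm_pos_iff.mpr hx
    have hφ0 : 0 ≤ φ x := (Real.exp_pos _).le
    rw [Real.norm_eq_abs, Pi.add_apply]
    by_cases h : ‖x‖ ≤ R
    · have h1 := hin x hx0 h
      have h2 : f₁ x = C₁ * ‖x‖ ^ (-((n:ℝ) - 2)) := by
        rw [hf₁_def]; dsimp only; rw [hψ_def]; dsimp only; rw [if_pos h]
      have h4 : |g x| ≤ f₁ x := by rw [h2]; exact h1
      have h3 : 0 ≤ f₂ x := mul_nonneg hC₂.le hφ0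
      linarith
    · have h1 := hout x (not_le.mp h)
      have h3 : 0 ≤ f₁ x := mul_nonneg hC₁.le (hψ0 x)
      have h4 : |g x| ≤ f₂ x := h1
      linarith
  -- pointwise identification of the p-th powers
  have hpt1 : ∀ x : EuclideanSpace ℝ (Fin n), ‖ψ x‖ₑ ^ p
      = ENNReal.ofReal (if ‖x‖ ≤ R then ‖x‖ ^ (-t) else 0) := by
    intro x
    rw [Real.enorm_eq_ofReal (hψ0 x), ENNReal.ofReal_rpow_of_nonneg (hψ0 x) hp0.le]
    congr 1
    rw [hψ_def]
    dsimp only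
    by_cases h : ‖x‖ ≤ R
    · rw [if_pos h, if_pos h,
        show -t = (-((n:ℝ) - 2)) * p by rw [ht_def]; ring,
        Real.rpow_mul (norm_nonneg x)]
    · rw [if_neg h, if_neg h]
      exact Real.zero_rpow hpne
  have hpt2 : ∀ x : EuclideanSpace ℝ (Fin n), ‖φ x‖ₑ ^ p
      = ENNReal.ofReal (Real.exp (-(p*c) * (‖x‖ * R⁻¹) ^ s)) := by
    intro x
    have h0 : 0 ≤ φ x := (Real.exp_pos _).le
    rw [Real.enorm_eq_ofReal h0, ENNReal.ofReal_rpow_of_nonneg h0 hp0.le]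
    congr 1
    rw [hφ_def]
    dsimp only
    rw [hτR, ← Real.exp_mul]
    congr 1
    ring
  -- radial computation for ψ
  have hm1 : Measurable (fun y : ℝ => ENNReal.ofReal (if y ≤ R then y ^ (-t) else 0)) :=
    (Measurable.ite (measurableSet_le measurable_id measurable_const)
      (measurable_id.pow_const _) measurable_const).ennreal_ofReal
  have hrad1 := lintegral_fun_norm_aux (volume : Measure (EuclideanSpace ℝ (Fin n))) _ hm1
  rw [finrank_euclideanSpace_fin] at hrad1
  have hstep1 : (n : ℝ≥0∞) * volume (ball (0 : EuclideanSpace ℝ (Fin n)) 1) *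
      ∫⁻ y in Ioi (0:ℝ), ENNReal.ofReal (y ^ (n - 1)) *
        ENNReal.ofReal (if y ≤ R then y ^ (-t) else 0)
      = ENNReal.ofReal ((n:ℝ) * v * (R ^ ((n:ℝ) - t) / ((n:ℝ) - t))) := by
    rw [inner_1d n (by omega) R t hR htn, hvol, ← ENNReal.ofReal_natCast n,
      ← ENNReal.ofReal_mul (by positivity : (0:ℝ) ≤ (n:ℝ)),
      ← ENNReal.ofReal_mul (mul_nonneg (by positivity : (0:ℝ) ≤ (n:ℝ)) hv.le)]
  have hL1 : ∫⁻ x, ‖ψ x‖ₑ ^ p ∂(volume)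
      = ENNReal.ofReal ((n:ℝ) * v * (R ^ ((n:ℝ) - t) / ((n:ℝ) - t))) :=
    (lintegral_congr hpt1).trans (hrad1.trans hstep1)
  -- radial computation for φ
  have hm2 : Measurable (fun y : ℝ => ENNReal.ofReal (Real.exp (-(p*c) * (y * R⁻¹) ^ s))) :=
    (Real.measurable_exp.comp
      (((measurable_id.mul_const _).pow_const s).const_mul (-(p*c)))).ennreal_ofReal
  have hrad2 := lintegral_fun_norm_aux (volume : Measure (EuclideanSpace ℝ (Fin n))) _ hm2
  rw [finrank_euclideanSpace_fin] at hrad2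
  have hstep2 : (n : ℝ≥0∞) * volume (ball (0 : EuclideanSpace ℝ (Fin n)) 1) *
      ∫⁻ y in Ioi (0:ℝ), ENNReal.ofReal (y ^ (n - 1)) *
        ENNReal.ofReal (Real.exp (-(p*c) * (y * R⁻¹) ^ s))
      = ENNReal.ofReal ((n:ℝ) * v * (R ^ ((n:ℝ)) * K2)) := by
    rw [outer_1d n (by omega) R (p*c) s hR (mul_pos hp0 hc) hs1, ← hK2_def, hvol,
      ← ENNReal.ofReal_natCast n,
      ← ENNReal.ofReal_mul (by positivity : (0:ℝ) ≤ (n:ℝ)),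
      ← ENNReal.ofReal_mul (mul_nonneg (by positivity : (0:ℝ) ≤ (n:ℝ)) hv.le)]
  have hL2 : ∫⁻ x, ‖φ x‖ₑ ^ p ∂(volume)
      = ENNReal.ofReal ((n:ℝ) * v * (R ^ ((n:ℝ)) * K2)) :=
    (lintegral_congr hpt2).trans (hrad2.trans hstep2)
  -- eLpNorm of f₁
  have hZ1nn : (0:ℝ) ≤ (n:ℝ) * v * (R ^ ((n:ℝ) - t) / ((n:ℝ) - t)) :=
    mul_nonneg hnv.le (div_nonneg (Real.rpow_nonneg hR.le _) hnt'.le)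
  have hP1 : (R ^ ((n:ℝ) - t)) ^ (1/p) = τ ^ (α/2*((n:ℝ)-t)*(1/p)) := by
    rw [hR_def, Real.rpow_mul hτ.le, Real.rpow_mul hτ.le]
  have hTT1 : τ ^ (-α - 1) * τ ^ (α/2*((n:ℝ)-t)*(1/p)) = τ ^ e := by
    rw [← Real.rpow_add hτ]
    congr 1
    rw [he_def, ht_def]
    field_simp
    ring
  have E1 : eLpNorm f₁ (ENNReal.ofReal p) volume = ENNReal.ofReal (A1 * τ ^ e) := by
    have hsmul : f₁ = C₁ • ψ := rfl
    rw [hsmul, eLpNorm_const_smul, eLpNorm_eq_lintegral_rpow_enorm_toReal hq0 hqt, hqr, hL1,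
      Real.enorm_eq_ofReal hC₁.le,
      ENNReal.ofReal_rpow_of_nonneg hZ1nn (by positivity : (0:ℝ) ≤ 1/p),
      ← ENNReal.ofReal_mul hC₁.le]
    congr 1
    have hsplit : ((n:ℝ) * v * (R ^ ((n:ℝ) - t) / ((n:ℝ) - t))) ^ (1/p)
        = ((n:ℝ) * v / ((n:ℝ) - t)) ^ (1/p) * (R ^ ((n:ℝ) - t)) ^ (1/p) := by
      rw [← Real.mul_rpow (div_nonneg hnv.le hnt'.le) (Real.rpow_nonneg hR.le _)]
      congr 1
      ring
    rw [hsplit, hP1, hC₁_def, hA1_def, ← hTT1]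
    ring
  -- eLpNorm of f₂
  have hZ2nn : (0:ℝ) ≤ (n:ℝ) * v * (R ^ ((n:ℝ)) * K2) :=
    mul_nonneg hnv.le (mul_nonneg (Real.rpow_nonneg hR.le _) hK2.le)
  have hP2 : (R ^ ((n:ℝ))) ^ (1/p) = τ ^ (α/2*(n:ℝ)*(1/p)) := by
    rw [hR_def, Real.rpow_mul hτ.le, Real.rpow_mul hτ.le]
  have hTT2 : τ ^ (-(α * ((n:ℝ) + 2) / 2) - 1 + α) * τ ^ (α/2*(n:ℝ)*(1/p)) = τ ^ e := by
    rw [← Real.rpow_add hτ]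
    congr 1
    rw [he_def]
    field_simp
    ring
  have E2 : eLpNorm f₂ (ENNReal.ofReal p) volume = ENNReal.ofReal (A2 * τ ^ e) := by
    have hsmul : f₂ = C₂ • φ := rfl
    rw [hsmul, eLpNorm_const_smul, eLpNorm_eq_lintegral_rpow_enorm_toReal hq0 hqt, hqr, hL2,
      Real.enorm_eq_ofReal hC₂.le,
      ENNReal.ofReal_rpow_of_nonneg hZ2nn (by positivity : (0:ℝ) ≤ 1/p),
      ← ENNReal.ofReal_mul hC₂.le]
    congr 1
    have hsplit : ((n:ℝ) * v * (R ^ ((n:ℝ)) * K2)) ^ (1/p)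
        = ((n:ℝ) * v * K2) ^ (1/p) * (R ^ ((n:ℝ))) ^ (1/p) := by
      rw [← Real.mul_rpow (mul_nonneg hnv.le hK2.le) (Real.rpow_nonneg hR.le _)]
      congr 1
      ring
    rw [hsplit, hP2, hC₂_def, hA2_def, ← hTT2]
    ring
  -- conclusion
  calc eLpNorm g (ENNReal.ofReal p) volume
      ≤ eLpNorm (f₁ + f₂) (ENNReal.ofReal p) volume := eLpNorm_mono_ae_real hae
    _ ≤ eLpNorm f₁ (ENNReal.ofReal p) volume + eLpNorm f₂ (ENNReal.ofReal p) volume :=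
        eLpNorm_add_le (hψm.const_mul C₁).aestronglyMeasurable
          (hφm.const_mul C₂).aestronglyMeasurable hq1
    _ = ENNReal.ofReal (A1 * τ ^ e) + ENNReal.ofReal (A2 * τ ^ e) := by rw [E1, E2]
    _ = ENNReal.ofReal ((A1 + A2) * τ ^ e) := by
        rw [← ENNReal.ofReal_add (mul_nonneg hA1.le (Real.rpow_nonneg hτ.le _))
          (mul_nonneg hA2.le (Real.rpow_nonneg hτ.le _)), ← add_mul]
end
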